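/- Let H, M_l, M_g be N×N complex matrices with H Hermitian and M_l, M_g positive semidefinite Hermitian, set X := −i•H + M_l + M_gᵀ and L_eff := fromBlocks(−i•H − M_l + M_gᵀ, 2•M_gᵀ, 2•M_l, −i•H + M_l − M_gᵀ), suppose Z satisfies the Sylvester equation Z⬝X + Xᴴ⬝Z + 2•(M_gᵀ − M_l) = 0, and suppose there is Δ > 0 such that every eigenvalue μ ∈ spectrum ℂ X satisfies Re μ ≥ Δ. Define F := fromBlocks(−Z, 1−Z, 1+Z, Z). Then for every t ∈ [0,1], every eigenvalue μ ∈ spectrum ℂ ((1−t)•L_eff + t•F) satisfies |Re μ| ≥ min 1 Δ. -/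
import Mathlib
open Matrix ComplexOrder

-- key lemma
lemma key_lem {N : ℕ} (X : Matrix (Fin N) (Fin N) ℂ) (Δ : ℝ) (hΔ : 0 < Δ)
    (hgap : ∀ μ ∈ spectrum ℂ X, Δ ≤ μ.re) (t : ℝ) (ht0 : 0 ≤ t) (ht1 : t ≤ 1) (c : ℂ)
    (h : (c • (1 : Matrix (Fin N) (Fin N) ℂ) - ((1 - t) • X + t • 1)).det = 0) :
    min 1 Δ ≤ c.re := by
  rcases Nat.eq_zero_or_pos N with hN | hN
  · subst hN
    simp [Matrix.det_fin_zero] at h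
  rcases eq_or_lt_of_le ht1 with ht | ht
  · -- t = 1
    subst ht
    have : ((c - 1) • (1 : Matrix (Fin N) (Fin N) ℂ)).det = 0 := by
      rw [← h]; congr 1
      module
    rw [Matrix.det_smul, Matrix.det_one, mul_one] at this
    have hc : c = 1 := by
      have := pow_eq_zero_iff (n := Fintype.card (Fin N)) (by simpa using hN.ne') |>.mp this
      linear_combination this
    rw [hc]
    simp [min_le_left]
  · -- t < 1
    set s : ℝ := 1 - t with hs
    have hs0 : 0 < s := by simp [hs]; linarith
    have hsC : (s : ℂ) ≠ 0 := by exact_mod_cast hs0.ne'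
    set lam : ℂ := (c - t) / s with hlam
    have hrw : c • (1 : Matrix (Fin N) (Fin N) ℂ) - ((1 - t) • X + t • 1)
        = (s : ℂ) • (lam • 1 - X) := by
      have h1 : (1 - t) • X = (s : ℂ) • X := by
        rw [hs]; rw [← algebraMap_smul ℂ (1 - t) X]; rfl
      have h2 : t • (1 : Matrix (Fin N) (Fin N) ℂ) = (t : ℂ) • 1 := by
        rw [← algebraMap_smul ℂ t (1 : Matrix (Fin N) (Fin N) ℂ)]; rfl
      rw [h1, h2, smul_sub, smul_smul, hlam, mul_div_cancel₀ _ hsC]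
      module
    rw [hrw, Matrix.det_smul] at h
    have hdet : (lam • (1 : Matrix (Fin N) (Fin N) ℂ) - X).det = 0 := by
      rcases mul_eq_zero.mp h with h' | h'
      · exact absurd h' (pow_ne_zero _ hsC)
      · exact h'
    have hmem : lam ∈ spectrum ℂ X := by
      rw [spectrum.mem_iff]
      intro hu
      rw [Algebra.algebraMap_eq_smul_one, Matrix.isUnit_iff_isUnit_det] at hu
      rw [hdet] at hu
      exact hu.ne_zero rfl
    have hre : Δ ≤ lam.re := hgap lam hmem
    have hc : c = (t : ℂ) + (s : ℂ) * lam := by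
      rw [hlam, mul_div_cancel₀ _ hsC]; ring
    have hcre : c.re = t + s * lam.re := by
      rw [hc]; simp [Complex.add_re, Complex.mul_re, Complex.ofReal_re, Complex.ofReal_im]
    rw [hcre]
    have hm1 : min 1 Δ ≤ 1 := min_le_left _ _
    have hm2 : min 1 Δ ≤ Δ := min_le_right _ _
    nlinarith [hs0.le, mul_le_mul_of_nonneg_left hre hs0.le]

theorem stmt_6 {N : ℕ} (H Ml Mg Z : Matrix (Fin N) (Fin N) ℂ)
    (hH : H.IsHermitian) (hMl : Ml.PosSemidef) (hMg : Mg.PosSemidef)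
    (X : Matrix (Fin N) (Fin N) ℂ)
    (hX : X = (-Complex.I) • H + Ml + Mgᵀ)
    (Leff : Matrix (Fin N ⊕ Fin N) (Fin N ⊕ Fin N) ℂ)
    (hLeff : Leff = fromBlocks ((-Complex.I) • H - Ml + Mgᵀ) ((2 : ℂ) • Mgᵀ)
      ((2 : ℂ) • Ml) ((-Complex.I) • H + Ml - Mgᵀ))
    (hZ : Z * X + Xᴴ * Z + (2 : ℂ) • (Mgᵀ - Ml) = 0)
    (Δ : ℝ) (hΔ : 0 < Δ)
    (hgap : ∀ μ ∈ spectrum ℂ X, Δ ≤ μ.re)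
    (F : Matrix (Fin N ⊕ Fin N) (Fin N ⊕ Fin N) ℂ)
    (hF : F = fromBlocks (-Z) (1 - Z) (1 + Z) Z) :
    ∀ t ∈ Set.Icc (0 : ℝ) 1,
      ∀ μ ∈ spectrum ℂ ((1 - t) • Leff + t • F), min 1 Δ ≤ |μ.re| := by
  intro t ht μ hμ
  obtain ⟨ht0, ht1⟩ := ht
  -- Hermitian facts
  have hMlH : Mlᴴ = Ml := hMl.isHermitian
  have hMgH : Mgᴴ = Mg := hMg.isHermitian
  have hXH : Xᴴ = Complex.I • H + Ml + Mgᵀ := by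
    rw [hX]
    simp [Matrix.conjTranspose_add, Matrix.conjTranspose_smul, hH.eq, hMl.isHermitian.eq,
      hMg.isHermitian.transpose.eq]
  -- the similarity transform
  set T : Matrix (Fin N ⊕ Fin N) (Fin N ⊕ Fin N) ℂ := fromBlocks 1 1 0 1 with hT
  set Ti : Matrix (Fin N ⊕ Fin N) (Fin N ⊕ Fin N) ℂ := fromBlocks 1 (-1) 0 1 with hTi
  -- determinant of the shifted matrix is zero
  have hdet : (μ • (1 : Matrix (Fin N ⊕ Fin N) (Fin N ⊕ Fin N) ℂ)
      - ((1 - t) • Leff + t • F)).det = 0 := by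
    have hmem := spectrum.mem_iff.mp hμ
    rw [Algebra.algebraMap_eq_smul_one] at hmem
    by_contra hne
    exact hmem ((Matrix.isUnit_iff_isUnit_det _).mpr (isUnit_iff_ne_zero.mpr hne))
  -- block decomposition of the conjugated matrix
  have hblock : T * ((μ • (1 : Matrix (Fin N ⊕ Fin N) (Fin N ⊕ Fin N) ℂ)
        - ((1 - t) • Leff + t • F))) * Ti =
      fromBlocks (μ • 1 - ((1 - t) • X + t • 1)) 0
        (-((1 - t) • ((2:ℂ) • Ml) + t • (1 + Z))) (μ • 1 + ((1 - t) • Xᴴ + t • 1)) := by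
    rw [hXH, hLeff, hF, hX, hT, hTi]
    rw [← Matrix.fromBlocks_one (l := Fin N) (m := Fin N)]
    simp only [Matrix.fromBlocks_smul, Matrix.fromBlocks_add, sub_eq_add_neg,
      Matrix.fromBlocks_neg, Matrix.fromBlocks_multiply]
    rw [Matrix.fromBlocks_inj]
    refine ⟨?_, ?_, ?_, ?_⟩ <;> simp <;> module
  -- determinants of T and Ti
  have hdetT : T.det = 1 := by
    rw [hT, Matrix.det_fromBlocks_zero₂₁]; simp
  have hdetTi : Ti.det = 1 := by
    rw [hTi, Matrix.det_fromBlocks_zero₂₁]; simp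
  have h0 := congrArg Matrix.det hblock
  rw [Matrix.det_mul, Matrix.det_mul, hdet, Matrix.det_fromBlocks_zero₁₂] at h0
  simp only [mul_zero, zero_mul] at h0
  rcases mul_eq_zero.mp h0.symm with h1 | h2
  · -- eigenvalue of the X-block
    have := key_lem X Δ hΔ hgap t ht0 ht1 μ h1
    exact le_trans this (le_abs_self _)
  · -- eigenvalue of the -Xᴴ-block
    have h3 : ((μ • (1 : Matrix (Fin N) (Fin N) ℂ) + ((1 - t) • Xᴴ + t • 1))ᴴ).det = 0 := by
      rw [Matrix.det_conjTranspose, h2, star_zero]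
    have h4 : (μ • (1 : Matrix (Fin N) (Fin N) ℂ) + ((1 - t) • Xᴴ + t • 1))ᴴ
        = (star μ) • 1 + ((1 - t) • X + t • 1) := by
      simp [Matrix.conjTranspose_add, Matrix.conjTranspose_smul,
        Matrix.conjTranspose_one, Matrix.conjTranspose_conjTranspose]
    rw [h4] at h3
    have h5 : ((-(star μ)) • (1 : Matrix (Fin N) (Fin N) ℂ) - ((1 - t) • X + t • 1)).det = 0 := by
      have hneg : (-(star μ)) • (1 : Matrix (Fin N) (Fin N) ℂ) - ((1 - t) • X + t • 1)
          = -((star μ) • 1 + ((1 - t) • X + t • 1)) := by module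
      rw [hneg, Matrix.det_neg, h3, mul_zero]
    have := key_lem X Δ hΔ hgap t ht0 ht1 (-(star μ)) h5
    have hre : (-(star μ)).re = -μ.re := by simp
    rw [hre] at this
    exact le_trans this (neg_le_abs _)
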